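/- Let p be a prime, let A₁ and A₂ be finite p-groups, let B be a group, and let f₁ : B → A₁ and f₂ : B → A₂ be injective group homomorphisms. If the amalgamated free product G = A₁ *_B A₂ (the pushout of f₁ and f₂) is residually p-finite, then there exist chief series (A₁^{(k)})_{k≥0} of A₁ and (A₂^{(k)})_{k≥0} of A₂ such that f₁⁻¹(A₁^{(k)}) = f₂⁻¹(A₂^{(k)}) for all k. -/

import Mathlib

/-- A group `G` is residually `p`-finite if every non-trivial element is detected by a
homomorphism to a finite `p`-group. -/
def ResiduallyPFinite (p : ℕ) (G : Type*) [Group G] : Prop :=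
  ∀ g : G, g ≠ 1 → ∃ (Q : Type) (_ : Group Q) (_ : Fintype Q) (φ : G →* Q),
    IsPGroup p Q ∧ φ g ≠ 1

/-- `S` is a chief series of the finite `p`-group `P`: a descending sequence of normal
subgroups of `P` starting at `P`, with successive quotients trivial or of order `p`,
terminating at the trivial subgroup. -/
def IsChiefSeries (p : ℕ) {P : Type*} [Group P] (S : ℕ → Subgroup P) : Prop :=
  S 0 = ⊤ ∧ (∀ k, S (k + 1) ≤ S k) ∧ (∀ k, (S k).Normal) ∧
    (∀ k, (S (k + 1)).relIndex (S k) = 1 ∨ (S (k + 1)).relIndex (S k) = p) ∧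
    ∃ n, S n = ⊥

/-- Every finite `p`-group has a chief series. -/
theorem exists_chief_aux (p : ℕ) (hp : p.Prime) :
    ∀ (n : ℕ) (Q : Type) [Group Q] [Finite Q], Nat.card Q ≤ n → IsPGroup p Q →
      ∃ T : ℕ → Subgroup Q, IsChiefSeries p T := by
  haveI := Fact.mk hp
  intro n
  induction n with
  | zero => intro Q _ _ hcard _; exact absurd hcard (by simpa using Nat.card_pos.ne')
  | succ n ih =>
    intro Q _ _ hcard hQ
    rcases subsingleton_or_nontrivial Q with hs | hs
    · refine ⟨fun _ => ⊥, ?_, fun k => le_rfl, fun k => inferInstance,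
        fun k => Or.inl (Subgroup.relIndex_self _), 0, rfl⟩
      ext x
      simp [Subsingleton.elim x 1]
    · -- find a central element of order p
      obtain ⟨k, hk⟩ := (IsPGroup.iff_card (p := p)).mp (hQ.to_subgroup (Subgroup.center Q))
      haveI : Nontrivial (Subgroup.center Q) := hQ.center_nontrivial
      have h1c : (1 : ℕ) < p ^ k := hk ▸ Finite.one_lt_card
      have hk1 : k ≠ 0 := by rintro rfl; simp at h1c
      letI := Fintype.ofFinite (Subgroup.center Q)
      have hdvd : p ∣ Fintype.card (Subgroup.center Q) := by
        rw [← Nat.card_eq_fintype_card, hk]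
        exact dvd_pow_self p hk1
      obtain ⟨z, hz⟩ := exists_prime_orderOf_dvd_card p hdvd
      have hzQ : orderOf (z : Q) = p := by
        rw [← hz]
        exact orderOf_injective (Subgroup.center Q).subtype
          (Subgroup.center Q).subtype_injective z
      set N := Subgroup.zpowers (z : Q) with hNdef
      have hNle : N ≤ Subgroup.center Q := Subgroup.zpowers_le.mpr z.2
      haveI hNnorm : N.Normal := by
        constructor
        intro m hm g
        have hc := Subgroup.mem_center_iff.mp (hNle hm) g
        have he : g * m * g⁻¹ = m := by rw [hc]; exact mul_inv_cancel_right m g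
        rwa [he]
      have hNcard : Nat.card N = p := by rw [hNdef, Nat.card_zpowers, hzQ]
      -- quotient
      have hQ' : IsPGroup p (Q ⧸ N) := hQ.to_quotient N
      have hcard' : Nat.card (Q ⧸ N) ≤ n := by
        have heq := Subgroup.card_eq_card_quotient_mul_card_subgroup N
        rw [hNcard] at heq
        have hpos := Nat.card_pos (α := Q ⧸ N)
        have h2 := hp.two_le
        nlinarith
      obtain ⟨T', hT0, hTmono, hTnorm, hTrel, nn, hTn⟩ := ih (Q ⧸ N) hcard' hQ'
      set mk := QuotientGroup.mk' N with hmkdef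
      have hmksurj : Function.Surjective mk := QuotientGroup.mk'_surjective N
      refine ⟨fun j => if j ≤ nn then (T' j).comap mk else ⊥, ?_, ?_, ?_, ?_, nn + 1, ?_⟩
      · simp [hT0]
      · intro j
        dsimp only
        by_cases h1 : j + 1 ≤ nn
        · rw [if_pos h1, if_pos (by omega)]
          exact Subgroup.comap_mono (hTmono j)
        · rw [if_neg h1]
          exact bot_le
      · intro j
        dsimp only
        by_cases h1 : j ≤ nn
        · rw [if_pos h1]; exact (hTnorm j).comap mk
        · rw [if_neg h1]; infer_instance
      · intro j
        dsimp only
        by_cases h1 : j + 1 ≤ nn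
        · rw [if_pos h1, if_pos (by omega), Subgroup.relIndex_comap,
            Subgroup.map_comap_eq_self_of_surjective hmksurj]
          exact hTrel j
        · by_cases h2 : j ≤ nn
          · have hj : j = nn := by omega
            rw [if_neg h1, if_pos h2, hj, hTn, MonoidHom.comap_bot,
              QuotientGroup.ker_mk', Subgroup.relIndex_bot_left, hNcard]
            exact Or.inr rfl
          · rw [if_neg h1, if_neg h2]
            exact Or.inl (Subgroup.relIndex_self _)
      · dsimp only
        rw [if_neg (by omega)]

/-- Pulling back a chief series along an injective hom gives a chief series. -/
theorem chief_comap_aux (p : ℕ) (hp : p.Prime) {A Q : Type} [Group A] [Group Q]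
    (ψ : A →* Q) (hψ : Function.Injective ψ) (T : ℕ → Subgroup Q)
    (hT : IsChiefSeries p T) : IsChiefSeries p (fun j => (T j).comap ψ) := by
  obtain ⟨hT0, hTmono, hTnorm, hTrel, nn, hTn⟩ := hT
  refine ⟨by simp [hT0], fun j => Subgroup.comap_mono (hTmono j),
    fun j => (hTnorm j).comap ψ, ?_, nn, ?_⟩
  · intro j
    haveI := hTnorm (j + 1)
    have hMle : Subgroup.map ψ ((T j).comap ψ) ≤ T j := Subgroup.map_comap_le ψ (T j)
    have key : ((T (j+1)).comap ψ).relIndex ((T j).comap ψ)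
        ∣ (T (j+1)).relIndex (T j) := by
      rw [Subgroup.relIndex_comap]
      set M := Subgroup.map ψ ((T j).comap ψ)
      set H := T (j + 1)
      have h1 : H.relIndex M = H.relIndex (M ⊔ H) := (Subgroup.relIndex_sup_right M H).symm
      have h2 : H.relIndex (M ⊔ H) * (M ⊔ H).relIndex (T j) = H.relIndex (T j) :=
        Subgroup.relIndex_mul_relIndex H (M ⊔ H) (T j) le_sup_right
          (sup_le hMle (hTmono j))
      rw [h1]
      exact ⟨_, h2.symm⟩
    rcases hTrel j with h | h
    · rw [h] at key
      exact Or.inl (Nat.dvd_one.mp key)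
    · rw [h] at key
      exact (hp.eq_one_or_self_of_dvd _ key).imp id id
  · show (T nn).comap ψ = ⊥
    rw [hTn, MonoidHom.comap_bot]
    exact (MonoidHom.ker_eq_bot_iff ψ).mpr hψ

section PushoutAux

variable (A₁ A₂ B : Type) [Group A₁] [Group A₂] [Group B]

/-- The two-element family `{A₁, A₂}`. -/
def GfAux : Bool → Type := fun b => Bool.rec A₂ A₁ b

instance GfAux.group : ∀ b, Group (GfAux A₁ A₂ b) := fun b =>
  Bool.rec (motive := fun b => Group (GfAux A₁ A₂ b))
    (inferInstance : Group A₂) (inferInstance : Group A₁) b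

/-- The family of maps `{f₁, f₂}`. -/
def φAux (f₁ : B →* A₁) (f₂ : B →* A₂) : ∀ b, B →* GfAux A₁ A₂ b := fun b =>
  Bool.rec (motive := fun b => B →* GfAux A₁ A₂ b) f₂ f₁ b

end PushoutAux

theorem stmt5 (p : ℕ) (hp : p.Prime)
    (A₁ A₂ B : Type) [Group A₁] [Group A₂] [Group B] [Finite A₁] [Finite A₂]
    (hA₁ : IsPGroup p A₁) (hA₂ : IsPGroup p A₂)
    (f₁ : B →* A₁) (f₂ : B →* A₂)
    (hf₁ : Function.Injective f₁) (hf₂ : Function.Injective f₂)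
    -- `G`, together with `j₁, j₂`, is the pushout of `f₁` and `f₂` in the category
    -- of groups, i.e. the amalgamated free product `A₁ *_B A₂`
    (G : Type) [Group G] (j₁ : A₁ →* G) (j₂ : A₂ →* G)
    (hcomm : j₁.comp f₁ = j₂.comp f₂)
    (huniv : ∀ (K : Type) [Group K] (k₁ : A₁ →* K) (k₂ : A₂ →* K),
      k₁.comp f₁ = k₂.comp f₂ →
        ∃! φ : G →* K, φ.comp j₁ = k₁ ∧ φ.comp j₂ = k₂)
    (hG : ResiduallyPFinite p G) :
    ∃ (S₁ : ℕ → Subgroup A₁) (S₂ : ℕ → Subgroup A₂),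
      IsChiefSeries p S₁ ∧ IsChiefSeries p S₂ ∧
        ∀ k, (S₁ k).comap f₁ = (S₂ k).comap f₂ := by
  classical
  -- Step 1: `j₁` and `j₂` are injective, via comparison with `Monoid.PushoutI`.
  set φ : ∀ b, B →* GfAux A₁ A₂ b := φAux A₁ A₂ B f₁ f₂ with hφdef
  have hφ : ∀ b, Function.Injective (φ b) := fun b => by cases b; exacts [hf₂, hf₁]
  have hcomm' : (Monoid.PushoutI.of (φ := φ) true).comp f₁ =
      (Monoid.PushoutI.of (φ := φ) false).comp f₂ := by
    rw [show f₁ = φ true from rfl, show f₂ = φ false from rfl,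
      Monoid.PushoutI.of_comp_eq_base, Monoid.PushoutI.of_comp_eq_base]
  obtain ⟨α, ⟨hα₁, hα₂⟩, -⟩ := huniv (Monoid.PushoutI φ)
    (Monoid.PushoutI.of (φ := φ) true) (Monoid.PushoutI.of (φ := φ) false) hcomm'
  have hj₁ : Function.Injective j₁ := by
    have h := Monoid.PushoutI.of_injective hφ true
    rw [← hα₁] at h
    exact Function.Injective.of_comp (f := α) h
  have hj₂ : Function.Injective j₂ := by
    have h := Monoid.PushoutI.of_injective hφ false
    rw [← hα₂] at h
    exact Function.Injective.of_comp (f := α) h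
  -- Step 2: a single hom to a finite p-group, injective on the images of A₁ and A₂.
  set J : A₁ ⊕ A₂ → G := Sum.elim j₁ j₂ with hJ
  have key : ∀ i : A₁ ⊕ A₂, ∃ (Q : Type) (_ : Group Q) (_ : Fintype Q) (ψ : G →* Q),
      IsPGroup p Q ∧ (J i ≠ 1 → ψ (J i) ≠ 1) := by
    intro i
    by_cases h : J i = 1
    · exact ⟨Unit, inferInstance, inferInstance, 1, fun g => ⟨0, rfl⟩,
        fun h' => absurd h h'⟩
    · obtain ⟨Q, hgQ, hfQ, ψ, h1, h2⟩ := hG (J i) h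
      exact ⟨Q, hgQ, hfQ, ψ, h1, fun _ => h2⟩
  choose Qi gi fi ψi hpi hni using key
  letI : ∀ i, Group (Qi i) := gi
  letI : ∀ i, Fintype (Qi i) := fi
  letI : Fintype (A₁ ⊕ A₂) := Fintype.ofFinite _
  let Φ : G →* ∀ i, Qi i := Pi.monoidHom ψi
  have hΦ : IsPGroup p (∀ i, Qi i) := by
    intro g
    choose k hk using fun i => hpi i (g i)
    refine ⟨Finset.univ.sup k, funext fun i => ?_⟩
    have hle : k i ≤ Finset.univ.sup k := Finset.le_sup (Finset.mem_univ i)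
    have h1 : p ^ Finset.univ.sup k = p ^ k i * p ^ (Finset.univ.sup k - k i) := by
      rw [← pow_add, Nat.add_sub_cancel' hle]
    show g i ^ p ^ Finset.univ.sup k = 1
    rw [h1, pow_mul, hk i, one_pow]
  have hψ₁ : Function.Injective (Φ.comp j₁) := by
    rw [injective_iff_map_eq_one]
    intro a ha
    by_contra hne
    have hj : j₁ a ≠ 1 := fun h => hne (hj₁ (h.trans (map_one j₁).symm))
    exact hni (Sum.inl a) hj (congrFun ha (Sum.inl a))
  have hψ₂ : Function.Injective (Φ.comp j₂) := by
    rw [injective_iff_map_eq_one]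
    intro a ha
    by_contra hne
    have hj : j₂ a ≠ 1 := fun h => hne (hj₂ (h.trans (map_one j₂).symm))
    exact hni (Sum.inr a) hj (congrFun ha (Sum.inr a))
  -- Step 3: chief series of the target, pulled back.
  obtain ⟨T, hT⟩ := exists_chief_aux p hp (Nat.card (∀ i, Qi i)) (∀ i, Qi i) le_rfl hΦ
  refine ⟨fun k => (T k).comap (Φ.comp j₁), fun k => (T k).comap (Φ.comp j₂),
    chief_comap_aux p hp _ hψ₁ T hT, chief_comap_aux p hp _ hψ₂ T hT, fun k => ?_⟩
  rw [Subgroup.comap_comap, Subgroup.comap_comap, MonoidHom.comp_assoc,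
    MonoidHom.comp_assoc, hcomm]
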